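/- (Type D_n, parts (v) and (vi) of the proposition on fundamental weights.) (a) If n ≥ 4 and n ≠ 5, then the minimum over k ∈ {1, …, n} of ℓ_{ϖ_n}⁻(ϖ_k) equals n − 1 and is attained at k = 1, realized by the composition w = s_n ∘ s_{n−2} ∘ s_{n−3} ∘ ⋯ ∘ s₁ (with s₁ applied first), which sends e₁ to −e_n. (b) If n = 5, then the minimum over k ∈ {1, …, 5} of ℓ_{ϖ₅}⁻(ϖ_k) equals 3 and is attained at k = 4: ℓ_{ϖ₅}⁻(ϖ₄) = 3, realized by w = s₅ ∘ s₃ ∘ s₄ (with s₄ applied first). -/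

import Mathlib

open scoped RealInnerProductSpace

/-- The `j`-th simple reflection of type `Dₙ` (`1 ≤ j ≤ n`), acting on `ℝⁿ`:
for `j < n` it transposes the coordinates numbered `j` and `j+1` (in `1`-based numbering),
and for `j = n` it sends `e_{n−1}` to `−eₙ` and `eₙ` to `−e_{n−1}`. -/
noncomputable def sD (n j : ℕ) : EuclideanSpace ℝ (Fin n) → EuclideanSpace ℝ (Fin n) :=
  fun v => WithLp.toLp 2 fun i =>
    if j = n then
      (if (i : ℕ) + 2 = n then -(v ⟨(n - 1) % n, Nat.mod_lt _ i.pos⟩)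
       else if (i : ℕ) + 1 = n then -(v ⟨(n - 2) % n, Nat.mod_lt _ i.pos⟩)
       else v i)
    else if (i : ℕ) + 1 = j then v ⟨j % n, Nat.mod_lt _ i.pos⟩
    else if (i : ℕ) = j then v ⟨(j - 1) % n, Nat.mod_lt _ i.pos⟩
    else v i

/-- The composition of the simple reflections indexed by the entries of `l`
(the last entry of the list is applied first). -/
noncomputable def compD (n : ℕ) (l : List ℕ) :
    EuclideanSpace ℝ (Fin n) → EuclideanSpace ℝ (Fin n) :=
  l.foldr (fun j g => sD n j ∘ g) id

/-- The fundamental weights of type `Dₙ` (`1 ≤ j ≤ n`): `ϖⱼ = e₁ + ⋯ + eⱼ` for `j ≤ n−2`,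
`ϖ_{n−1} = (e₁ + ⋯ + e_{n−1} − eₙ)/2` and `ϖₙ = (e₁ + ⋯ + e_{n−1} + eₙ)/2`. -/
noncomputable def wtD (n j : ℕ) : EuclideanSpace ℝ (Fin n) :=
  if j + 1 = n then WithLp.toLp 2 (fun i => if (i : ℕ) + 1 = n then -(1 / 2 : ℝ) else 1 / 2)
  else if j = n then WithLp.toLp 2 (fun _ => (1 / 2 : ℝ))
  else WithLp.toLp 2 fun i => if (i : ℕ) < j then 1 else 0

/-- The vector `−eₙ`. -/
noncomputable def negEnD (n : ℕ) : EuclideanSpace ℝ (Fin n) :=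
  WithLp.toLp 2 fun i => if (i : ℕ) + 1 = n then -1 else 0

lemma innerD (n : ℕ) (u v : EuclideanSpace ℝ (Fin n)) : ⟪u, v⟫ = ∑ i, u i * v i := by
  simp [PiLp.inner_apply, RCLike.inner_apply, conj_trivial, mul_comm]

lemma sD_n_apply (n : ℕ) (hn : 2 ≤ n) (v : EuclideanSpace ℝ (Fin n)) (i : Fin n) :
    sD n n v i = if (i : ℕ) = n - 2 then -(v ⟨n - 1, by omega⟩)
      else if (i : ℕ) = n - 1 then -(v ⟨n - 2, by omega⟩) else v i := by
  have h1 : (n - 1) % n = n - 1 := Nat.mod_eq_of_lt (by omega)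
  have h2 : (n - 2) % n = n - 2 := Nat.mod_eq_of_lt (by omega)
  have hi : (i : ℕ) < n := i.isLt
  unfold sD
  simp only [PiLp.toLp_apply]
  rw [if_pos trivial]
  by_cases ha : (i : ℕ) + 2 = n
  · rw [if_pos ha, if_pos (by omega : (i : ℕ) = n - 2)]
    exact congrArg (fun t => -(v t)) (Fin.ext h1)
  · rw [if_neg ha]
    by_cases hb : (i : ℕ) + 1 = n
    · rw [if_pos hb, if_neg (by omega), if_pos (by omega)]
      exact congrArg (fun t => -(v t)) (Fin.ext h2)
    · rw [if_neg hb, if_neg (by omega), if_neg (by omega)]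

lemma sD_swap_apply (n j : ℕ) (hj : 1 ≤ j) (hjn : j < n) (v : EuclideanSpace ℝ (Fin n)) (i : Fin n) :
    sD n j v i = if (i : ℕ) = j - 1 then v ⟨j, by omega⟩
      else if (i : ℕ) = j then v ⟨j - 1, by omega⟩ else v i := by
  have h1 : j % n = j := Nat.mod_eq_of_lt hjn
  have h2 : (j - 1) % n = j - 1 := Nat.mod_eq_of_lt (by omega)
  unfold sD
  simp only [PiLp.toLp_apply]
  rw [if_neg (by omega : j ≠ n)]
  by_cases ha : (i : ℕ) + 1 = j
  · rw [if_pos ha, if_pos (by omega : (i : ℕ) = j - 1)]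
    exact congrArg v (Fin.ext h1)
  · rw [if_neg ha]
    by_cases hb : (i : ℕ) = j
    · rw [if_pos hb, if_neg (by omega), if_pos hb]
      exact congrArg v (Fin.ext h2)
    · rw [if_neg hb, if_neg (by omega), if_neg hb]

lemma adj_helper {n : ℕ} (a b : Fin n) (hab : a ≠ b) (ε : ℝ) (u v su sv : EuclideanSpace ℝ (Fin n))
    (hsu : ∀ i, su i = if i = a then ε * u b else if i = b then ε * u a else u i)
    (hsv : ∀ i, sv i = if i = a then ε * v b else if i = b then ε * v a else v i) :
    ∑ i, su i * v i = ∑ i, u i * sv i := by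
  rw [← Equiv.sum_comp (Equiv.swap a b) (fun i => su i * v i)]
  apply Finset.sum_congr rfl
  intro i _
  rcases eq_or_ne i a with rfl | hia
  · rw [Equiv.swap_apply_left, hsu, hsv]
    simp only [if_pos rfl, if_neg hab.symm, if_neg hab, if_true, eq_self_iff_true]
    ring
  rcases eq_or_ne i b with rfl | hib
  · rw [Equiv.swap_apply_right, hsu, hsv]
    simp only [if_pos rfl, if_neg hab, if_neg hab.symm, if_true, eq_self_iff_true]
    ring
  · rw [Equiv.swap_apply_of_ne_of_ne hia hib, hsu, hsv]
    simp only [if_neg hia, if_neg hib]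

lemma sD_adj (n j : ℕ) (hn : 4 ≤ n) (hj : 1 ≤ j) (hjn : j ≤ n) (u v : EuclideanSpace ℝ (Fin n)) :
    ⟪sD n j u, v⟫ = ⟪u, sD n j v⟫ := by
  rw [innerD, innerD]
  rcases eq_or_lt_of_le hjn with rfl | hlt
  · -- j = n
    refine adj_helper ⟨j - 2, by omega⟩ ⟨j - 1, by omega⟩ (by simp [Fin.ext_iff]; omega) (-1) u v _ _ ?_ ?_ <;>
      intro i <;> rw [sD_n_apply j (by omega)] <;>
      simp only [Fin.ext_iff, Fin.val_mk] <;>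
      split_ifs <;> ring
  · -- j < n
    refine adj_helper ⟨j - 1, by omega⟩ ⟨j, by omega⟩ (by simp [Fin.ext_iff]; omega) 1 u v _ _ ?_ ?_ <;>
      intro i <;> rw [sD_swap_apply n j hj hlt] <;>
      simp only [Fin.ext_iff, Fin.val_mk] <;>
      split_ifs <;> ring

lemma compD_cons (n j : ℕ) (l : List ℕ) (x : EuclideanSpace ℝ (Fin n)) :
    compD n (j :: l) x = sD n j (compD n l x) := rfl

lemma compD_append (n : ℕ) (l₁ l₂ : List ℕ) (x : EuclideanSpace ℝ (Fin n)) :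
    compD n (l₁ ++ l₂) x = compD n l₁ (compD n l₂ x) := by
  induction l₁ with
  | nil => rfl
  | cons a t ih => rw [List.cons_append, compD_cons, compD_cons, ih]

lemma compD_transpose (n : ℕ) (hn : 4 ≤ n) (l : List ℕ) (hl : ∀ m ∈ l, 1 ≤ m ∧ m ≤ n)
    (u v : EuclideanSpace ℝ (Fin n)) :
    ⟪compD n l u, v⟫ = ⟪u, compD n l.reverse v⟫ := by
  induction l generalizing v with
  | nil => rfl
  | cons a t ih =>
    obtain ⟨ha1, ha2⟩ := hl a (List.mem_cons_self)
    rw [compD_cons, sD_adj n a hn ha1 ha2,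
      ih (fun m hm => hl m (List.mem_cons_of_mem a hm)), List.reverse_cons, compD_append]
    rfl

noncomputable def Ncnt (n p : ℕ) (x : EuclideanSpace ℝ (Fin n)) : ℕ :=
  ∑ i : Fin n, if (i : ℕ) < p ∧ x i < 0 then 1 else 0

lemma sum_le_one_helper {n : ℕ} (F G : Fin n → ℕ) (i₀ : Fin n)
    (h : ∀ i, i ≠ i₀ → F i = G i) (hF : F i₀ ≤ 1) : ∑ i, F i ≤ (∑ i, G i) + 1 := by
  rw [← Finset.add_sum_erase _ F (Finset.mem_univ i₀),
    ← Finset.add_sum_erase _ G (Finset.mem_univ i₀)]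
  have he : ∑ i ∈ Finset.univ.erase i₀, F i = ∑ i ∈ Finset.univ.erase i₀, G i :=
    Finset.sum_congr rfl (fun i hi => h i (Finset.ne_of_mem_erase hi))
  omega

lemma Ncnt_sD_ne (n j : ℕ) (hn : 4 ≤ n) (hj : 1 ≤ j) (hjn : j ≤ n)
    (x : EuclideanSpace ℝ (Fin n)) (p : ℕ) (hp : p ≤ n - 1)
    (hne : p ≠ if j = n then n - 1 else j) : Ncnt n p (sD n j x) = Ncnt n p x := by
  unfold Ncnt
  rcases eq_or_lt_of_le hjn with rfl | hlt
  · -- j = n, p ≤ n - 2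
    rw [if_pos rfl] at hne
    apply Finset.sum_congr rfl
    intro i _
    by_cases hi : (i : ℕ) < p
    · rw [sD_n_apply j (by omega), if_neg (show ¬((i : ℕ) = j - 2) by omega),
        if_neg (show ¬((i : ℕ) = j - 1) by omega)]
    · rw [if_neg (fun h => hi h.1), if_neg (fun h => hi h.1)]
  · rw [if_neg (by omega : j ≠ n)] at hne
    rcases lt_or_gt_of_ne hne with hpj | hpj
    · -- p < j : pointwise
      apply Finset.sum_congr rfl
      intro i _
      by_cases hi : (i : ℕ) < p
      · rw [sD_swap_apply n j hj hlt, if_neg (show ¬((i : ℕ) = j - 1) by omega),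
          if_neg (show ¬((i : ℕ) = j) by omega)]
      · rw [if_neg (fun h => hi h.1), if_neg (fun h => hi h.1)]
    · -- p > j : swap reindex
      have haj : j - 1 < n := by omega
      set a : Fin n := ⟨j - 1, haj⟩ with ha
      set b : Fin n := ⟨j, hlt⟩ with hb
      have hab : a ≠ b := by
        simp only [ha, hb, ne_eq, Fin.mk.injEq]
        omega
      have e1 : sD n j x a = x b := by
        rw [sD_swap_apply n j hj hlt, if_pos (show ((a : ℕ) = j - 1) from rfl)]
      have e2 : sD n j x b = x a := by
        rw [sD_swap_apply n j hj hlt, if_neg (show ¬((b : ℕ) = j - 1) by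
            simp only [hb]; omega),
          if_pos (show ((b : ℕ) = j) from rfl)]
      have h1 : ((a : ℕ) < p) := by simp only [ha]; omega
      have h2 : ((b : ℕ) < p) := by simp only [hb]; omega
      rw [← Equiv.sum_comp (Equiv.swap a b) (fun i => if (i : ℕ) < p ∧ x i < 0 then 1 else 0)]
      apply Finset.sum_congr rfl
      intro i _
      rcases eq_or_ne i a with rfl | hia
      · rw [Equiv.swap_apply_left]
        simp only [e1, h1, h2, true_and]
      rcases eq_or_ne i b with rfl | hib
      · rw [Equiv.swap_apply_right]
        simp only [e2, h1, h2, true_and]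
      · have e3 : sD n j x i = x i := by
          rw [sD_swap_apply n j hj hlt,
            if_neg (show ¬((i : ℕ) = j - 1) from fun h => hia (Fin.ext h)),
            if_neg (show ¬((i : ℕ) = j) from fun h => hib (Fin.ext h))]
        rw [Equiv.swap_apply_of_ne_of_ne hia hib, e3]

lemma Ncnt_sD_le (n j : ℕ) (hn : 4 ≤ n) (hj : 1 ≤ j) (hjn : j ≤ n)
    (x : EuclideanSpace ℝ (Fin n)) (p : ℕ) (hp : p ≤ n - 1) :
    Ncnt n p (sD n j x) ≤ Ncnt n p x + 1 := by
  by_cases hne : p = if j = n then n - 1 else j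
  swap
  · rw [Ncnt_sD_ne n j hn hj hjn x p hp hne]; omega
  unfold Ncnt
  rcases eq_or_lt_of_le hjn with rfl | hlt
  · rw [if_pos rfl] at hne
    subst hne
    apply sum_le_one_helper _ _ (⟨j - 2, by omega⟩ : Fin j)
    · intro i hi
      have hine : (i : ℕ) ≠ j - 2 := fun h => hi (Fin.ext h)
      by_cases hi2 : (i : ℕ) = j - 1
      · have hnlt : ¬((i : ℕ) < j - 1) := by omega
        rw [if_neg (fun h => hnlt h.1), if_neg (fun h => hnlt h.1)]
      · by_cases hip : (i : ℕ) < j - 1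
        · have e3 : sD j j x i = x i := by
            rw [sD_n_apply j (by omega), if_neg hine, if_neg hi2]
          rw [e3]
        · rw [if_neg (fun h => hip h.1), if_neg (fun h => hip h.1)]
    · split_ifs <;> omega
  · rw [if_neg (by omega : j ≠ n)] at hne
    subst hne
    apply sum_le_one_helper _ _ (⟨p - 1, by omega⟩ : Fin n)
    · intro i hi
      have hine : (i : ℕ) ≠ p - 1 := fun h => hi (Fin.ext h)
      by_cases hi2 : (i : ℕ) = p
      · have hnlt : ¬((i : ℕ) < p) := by omega
        rw [if_neg (fun h => hnlt h.1), if_neg (fun h => hnlt h.1)]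
      · by_cases hip : (i : ℕ) < p
        · have e3 : sD n p x i = x i := by
            rw [sD_swap_apply n p hj hlt, if_neg hine, if_neg hi2]
          rw [e3]
        · rw [if_neg (fun h => hip h.1), if_neg (fun h => hip h.1)]
    · split_ifs <;> omega

noncomputable def PhiD (n C m : ℕ) (x : EuclideanSpace ℝ (Fin n)) : ℕ :=
  ∑ p ∈ Finset.Icc (C + 1) (n - 1), (min m (p - C) - Ncnt n p x)

lemma PhiD_step (n j C m : ℕ) (hn : 4 ≤ n) (hj : 1 ≤ j) (hjn : j ≤ n)
    (x : EuclideanSpace ℝ (Fin n)) :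
    PhiD n C m x ≤ PhiD n C m (sD n j x) + 1 := by
  set p₀ : ℕ := if j = n then n - 1 else j with hp₀
  have key : ∀ p ∈ Finset.Icc (C + 1) (n - 1),
      (min m (p - C) - Ncnt n p x) ≤
        (min m (p - C) - Ncnt n p (sD n j x)) + (if p = p₀ then 1 else 0) := by
    intro p hp
    rw [Finset.mem_Icc] at hp
    by_cases hpe : p = p₀
    · have h2 := Ncnt_sD_le n j hn hj hjn x p hp.2
      rw [if_pos hpe]
      rcases le_total m (p - C) with hm | hm
      · rw [min_eq_left hm]; omega
      · rw [min_eq_right hm]; omega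
    · rw [Ncnt_sD_ne n j hn hj hjn x p hp.2 hpe, if_neg hpe]
      omega
  calc PhiD n C m x ≤ ∑ p ∈ Finset.Icc (C + 1) (n - 1),
        ((min m (p - C) - Ncnt n p (sD n j x)) + (if p = p₀ then 1 else 0)) :=
        Finset.sum_le_sum key
    _ = PhiD n C m (sD n j x) + ∑ p ∈ Finset.Icc (C + 1) (n - 1), (if p = p₀ then 1 else 0) := by
        rw [Finset.sum_add_distrib]; rfl
    _ ≤ PhiD n C m (sD n j x) + 1 := by
        rw [Finset.sum_ite_eq' (Finset.Icc (C + 1) (n - 1)) p₀ (fun _ => 1)]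
        split_ifs <;> omega

lemma PhiD_compD (n C m : ℕ) (hn : 4 ≤ n) (l : List ℕ) (hl : ∀ j ∈ l, 1 ≤ j ∧ j ≤ n)
    (x : EuclideanSpace ℝ (Fin n)) :
    PhiD n C m x ≤ PhiD n C m (compD n l x) + l.length := by
  induction l with
  | nil => simp [compD]
  | cons a t ih =>
    obtain ⟨ha1, ha2⟩ := hl a (List.mem_cons_self)
    have h1 := ih (fun j hj => hl j (List.mem_cons_of_mem a hj))
    have h2 := PhiD_step n a C m hn ha1 ha2 (compD n t x)
    rw [compD_cons]
    simp only [List.length_cons]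
    omega

lemma Ncnt_mono (n : ℕ) (x : EuclideanSpace ℝ (Fin n)) {p q : ℕ} (h : p ≤ q) :
    Ncnt n p x ≤ Ncnt n q x := by
  apply Finset.sum_le_sum
  intro i _
  by_cases hx : x i < 0
  · by_cases hip : (i : ℕ) < p
    · rw [if_pos ⟨hip, hx⟩, if_pos ⟨by omega, hx⟩]
    · rw [if_neg (fun h2 => hip h2.1)]
      exact Nat.zero_le _
  · rw [if_neg (fun h2 => hx h2.2)]
    exact Nat.zero_le _

lemma Ncnt_lip (n : ℕ) (x : EuclideanSpace ℝ (Fin n)) {p q : ℕ} (h : p ≤ q) :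
    Ncnt n q x ≤ Ncnt n p x + (q - p) := by
  have h1 : Ncnt n q x ≤ Ncnt n p x +
      ∑ i : Fin n, (if p ≤ (i : ℕ) ∧ (i : ℕ) < q then 1 else 0) := by
    unfold Ncnt
    rw [← Finset.sum_add_distrib]
    apply Finset.sum_le_sum
    intro i _
    by_cases hx : x i < 0
    · simp only [hx, and_true]
      split_ifs <;> omega
    · rw [if_neg (fun h2 => hx h2.2), if_neg (fun h2 => hx h2.2)]
      exact Nat.zero_le _
  have h2 : ∑ i : Fin n, (if p ≤ (i : ℕ) ∧ (i : ℕ) < q then 1 else 0) ≤ q - p := by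
    rw [← Finset.card_filter]
    have : (Finset.univ.filter (fun i : Fin n => p ≤ (i : ℕ) ∧ (i : ℕ) < q)).card ≤
        (Finset.Ico p q).card := by
      refine Finset.card_le_card_of_injOn (fun i : Fin n => (i : ℕ)) ?_ ?_
      · intro i hi
        rw [Finset.mem_coe, Finset.mem_filter] at hi
        rw [Finset.mem_coe, Finset.mem_Ico]
        exact hi.2
      · intro i _ j _ hij
        exact Fin.ext hij
    rwa [Nat.card_Ico] at this
  omega

lemma PhiD_zero (n C m : ℕ) (hCm : C + m ≤ n) (x : EuclideanSpace ℝ (Fin n))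
    (hN : m ≤ Ncnt n (C + m) x) : PhiD n C m x = 0 := by
  apply Finset.sum_eq_zero
  intro p hp
  rw [Finset.mem_Icc] at hp
  rcases le_or_gt p (C + m) with hple | hpgt
  · have h2 := Ncnt_lip n x hple
    rcases le_total m (p - C) with hm | hm
    · rw [min_eq_left hm]; omega
    · rw [min_eq_right hm]; omega
  · have h2 := Ncnt_mono n x (le_of_lt hpgt)
    rcases le_total m (p - C) with hm | hm
    · rw [min_eq_left hm]; omega
    · rw [min_eq_right hm]; omega

def PmD (n : ℕ) (x : EuclideanSpace ℝ (Fin n)) : Prop :=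
  ∀ i, x i = 1 / 2 ∨ x i = -(1 / 2)

lemma PmD_sD (n j : ℕ) (hn : 4 ≤ n) (hj : 1 ≤ j) (hjn : j ≤ n)
    (x : EuclideanSpace ℝ (Fin n)) (hx : PmD n x) : PmD n (sD n j x) := by
  intro i
  rcases eq_or_lt_of_le hjn with rfl | hlt
  · rw [sD_n_apply j (by omega)]
    split_ifs
    · rcases hx ⟨j - 1, by omega⟩ with h | h <;> rw [h] <;> norm_num
    · rcases hx ⟨j - 2, by omega⟩ with h | h <;> rw [h] <;> norm_num
    · exact hx i
  · rw [sD_swap_apply n j hj hlt]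
    split_ifs
    · exact hx _
    · exact hx _
    · exact hx i

lemma PmD_compD (n : ℕ) (hn : 4 ≤ n) (l : List ℕ) (hl : ∀ j ∈ l, 1 ≤ j ∧ j ≤ n)
    (x : EuclideanSpace ℝ (Fin n)) (hx : PmD n x) : PmD n (compD n l x) := by
  induction l with
  | nil => exact hx
  | cons a t ih =>
    obtain ⟨ha1, ha2⟩ := hl a (List.mem_cons_self)
    rw [compD_cons]
    exact PmD_sD n a hn ha1 ha2 _ (ih (fun j hj => hl j (List.mem_cons_of_mem a hj)))

lemma wtD_n_eval (n : ℕ) : wtD n n = WithLp.toLp 2 (fun _ => (1 / 2 : ℝ)) := by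
  unfold wtD
  rw [if_neg (by omega), if_pos rfl]

lemma PmD_wtDn (n : ℕ) : PmD n (wtD n n) := by
  intro i
  rw [wtD_n_eval]
  left; rfl

lemma Ncnt_wtDn (n p : ℕ) : Ncnt n p (wtD n n) = 0 := by
  apply Finset.sum_eq_zero
  intro i _
  rw [wtD_n_eval]
  exact if_neg (fun h => absurd h.2 (by norm_num))

lemma sum_shift (f : ℕ → ℕ) (C : ℕ) : ∀ R,
    ∑ p ∈ Finset.Icc (C + 1) (C + R), f (p - C) = ∑ q ∈ Finset.Icc 1 R, f q := by
  intro R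
  induction R with
  | zero =>
    rw [Finset.Icc_eq_empty (by omega), Finset.Icc_eq_empty (by omega),
      Finset.sum_empty, Finset.sum_empty]
  | succ R ih =>
    rw [show C + (R + 1) = (C + R) + 1 from rfl,
      Finset.sum_Icc_succ_top (by omega : C + 1 ≤ C + R + 1),
      Finset.sum_Icc_succ_top (by omega : 1 ≤ R + 1), ih,
      show C + R + 1 - C = R + 1 by omega]

lemma PhiD_init (n C m : ℕ) (hC : C ≤ n - 1) :
    PhiD n C m (wtD n n) = ∑ q ∈ Finset.Icc 1 (n - 1 - C), min m q := by
  unfold PhiD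
  rw [show n - 1 = C + (n - 1 - C) by omega]
  rw [Finset.sum_congr rfl (fun p _ => by rw [Ncnt_wtDn, Nat.sub_zero]),
    sum_shift (fun q => min m q) C (n - 1 - C),
    show C + (n - 1 - C) - C = n - 1 - C by omega]

lemma G1 (m : ℕ) : ∀ R, R ≤ m → 2 * ∑ q ∈ Finset.Icc 1 R, min m q = R * (R + 1) := by
  intro R
  induction R with
  | zero => intro _; rw [Finset.Icc_eq_empty (by omega)]; simp
  | succ R ih =>
    intro hR
    rw [Finset.sum_Icc_succ_top (by omega : 1 ≤ R + 1), Nat.mul_add, ih (by omega),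
      min_eq_right (by omega : R + 1 ≤ m)]
    ring

lemma G2 (m : ℕ) : ∀ d, 2 * ∑ q ∈ Finset.Icc 1 (m + d), min m q = m * (m + 1) + 2 * m * d := by
  intro d
  induction d with
  | zero => rw [Nat.add_zero, G1 m m le_rfl]; ring
  | succ d ih =>
    rw [show m + (d + 1) = (m + d) + 1 from rfl,
      Finset.sum_Icc_succ_top (by omega : 1 ≤ m + d + 1), Nat.mul_add, ih,
      min_eq_left (by omega : m ≤ m + d + 1)]
    ring

lemma arith_sq (a : ℕ) (ha : 2 ≤ a) : 4 * a ≤ a * (a + 1) + 2 := by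
  rcases Nat.lt_or_ge a 3 with h | h
  · interval_cases a <;> omega
  · have h4 : 4 ≤ a + 1 := by omega
    have : a * 4 ≤ a * (a + 1) := Nat.mul_le_mul_left a h4
    omega

lemma sum_half (n p : ℕ) (hp : p ≤ n) :
    ∑ i : Fin n, (if (i : ℕ) < p then (1 / 2 : ℝ) else 0) = (p : ℝ) / 2 := by
  rw [Fin.sum_univ_eq_sum_range (fun i => if i < p then (1 / 2 : ℝ) else 0) n]
  rw [← Finset.sum_subset (Finset.range_subset_range.mpr hp)
    (fun i _ hi => if_neg (by rw [Finset.mem_range, not_lt] at hi; omega))]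
  · rw [Finset.sum_congr rfl (fun i hi => if_pos (Finset.mem_range.mp hi)),
      Finset.sum_const, Finset.card_range, nsmul_eq_mul]
    ring

lemma sum_if_lt_eq (n p : ℕ) (hp : p ≤ n) (x : EuclideanSpace ℝ (Fin n)) (hx : PmD n x) :
    ∑ i : Fin n, (if (i : ℕ) < p then x i else 0) = (p : ℝ) / 2 - (Ncnt n p x : ℝ) := by
  have e : ∀ i : Fin n, (if (i : ℕ) < p then x i else 0) =
      (if (i : ℕ) < p then (1 / 2 : ℝ) else 0) -
        (if (i : ℕ) < p ∧ x i < 0 then (1 : ℝ) else 0) := by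
    intro i
    rcases hx i with h | h <;> by_cases hip : (i : ℕ) < p <;>
      simp [h, hip] <;> norm_num
  rw [Finset.sum_congr rfl (fun i _ => e i), Finset.sum_sub_distrib, sum_half n p hp]
  congr 1
  unfold Ncnt
  rw [Nat.cast_sum]
  apply Finset.sum_congr rfl
  intro i _
  split_ifs <;> norm_num

lemma finalA (n k : ℕ) (hn : 4 ≤ n) (hk1 : 1 ≤ k) (hk : k ≤ n - 2)
    (x : EuclideanSpace ℝ (Fin n)) (hx : PmD n x) (hneg : ⟪wtD n k, x⟫ < 0) :
    k / 2 + 1 ≤ Ncnt n k x := by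
  rw [innerD] at hneg
  have e : ∀ i : Fin n, wtD n k i * x i = if (i : ℕ) < k then x i else 0 := by
    intro i
    unfold wtD
    rw [if_neg (by omega : ¬(k + 1 = n)), if_neg (by omega : ¬(k = n))]
    simp only [PiLp.toLp_apply]
    split_ifs <;> simp
  rw [Finset.sum_congr rfl (fun i _ => e i), sum_if_lt_eq n k (by omega) x hx] at hneg
  have h2 : (k : ℝ) < 2 * (Ncnt n k x : ℝ) := by linarith
  have h3 : k < 2 * Ncnt n k x := by exact_mod_cast h2
  omega

lemma finalC (n : ℕ) (hn : 4 ≤ n) (x : EuclideanSpace ℝ (Fin n)) (hx : PmD n x)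
    (hneg : ⟪wtD n n, x⟫ < 0) : n / 2 + 1 ≤ Ncnt n n x := by
  rw [innerD] at hneg
  have e : ∀ i : Fin n, wtD n n i * x i = (1 / 2 : ℝ) * (if (i : ℕ) < n then x i else 0) := by
    intro i
    rw [wtD_n_eval, if_pos i.isLt]
  rw [Finset.sum_congr rfl (fun i _ => e i), ← Finset.mul_sum,
    sum_if_lt_eq n n le_rfl x hx] at hneg
  have h2 : (n : ℝ) < 2 * (Ncnt n n x : ℝ) := by linarith
  have h3 : n < 2 * Ncnt n n x := by exact_mod_cast h2
  omega

lemma finalB (n : ℕ) (hn : 4 ≤ n) (x : EuclideanSpace ℝ (Fin n)) (hx : PmD n x)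
    (hneg : ⟪wtD n (n - 1), x⟫ < 0) : n / 2 ≤ Ncnt n (n - 1) x := by
  rw [innerD] at hneg
  have hlast : n - 1 < n := by omega
  have e : ∀ i : Fin n, wtD n (n - 1) i * x i =
      (1 / 2 : ℝ) * (if (i : ℕ) < n - 1 then x i else 0) -
        (1 / 2 : ℝ) * (if i = (⟨n - 1, hlast⟩ : Fin n) then x i else 0) := by
    intro i
    unfold wtD
    rw [if_pos (by omega : (n - 1) + 1 = n)]
    simp only [PiLp.toLp_apply]
    by_cases hi : (i : ℕ) + 1 = n
    · rw [if_pos hi, if_neg (by omega : ¬((i : ℕ) < n - 1)),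
        if_pos (Fin.ext (show (i : ℕ) = n - 1 by omega))]
      ring
    · rw [if_neg hi, if_pos (show (i : ℕ) < n - 1 by have := i.isLt; omega),
        if_neg (fun he => hi (by rw [show (i : ℕ) = n - 1 from congrArg Fin.val he]; omega))]
      ring
  rw [Finset.sum_congr rfl (fun i _ => e i), Finset.sum_sub_distrib, ← Finset.mul_sum,
    ← Finset.mul_sum, sum_if_lt_eq n (n - 1) (by omega) x hx,
    Finset.sum_ite_eq' Finset.univ (⟨n - 1, hlast⟩ : Fin n) x] at hneg
  rw [if_pos (Finset.mem_univ _)] at hneg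
  have hxl : x ⟨n - 1, hlast⟩ ≤ 1 / 2 := by
    rcases hx ⟨n - 1, hlast⟩ with h | h <;> rw [h] <;> norm_num
  have h2 : ((n - 1 : ℕ) : ℝ) < 2 * (Ncnt n (n - 1) x : ℝ) + 1 := by linarith
  have h3 : (n - 1 : ℕ) < 2 * Ncnt n (n - 1) x + 1 := by exact_mod_cast h2
  omega

lemma arith_k (a : ℕ) : 4 * a + 2 ≤ (a + 1) * (a + 2) := by
  have expand : (a + 1) * (a + 2) = a * a + 3 * a + 2 := by ring
  have h : a ≤ a * a := by
    rcases Nat.eq_zero_or_pos a with rfl | h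
    · omega
    · exact Nat.le_mul_of_pos_left a h
  omega

lemma arithCore (n S : ℕ) (hn : 4 ≤ n) (hS : 2 * S = (n / 2) * (n / 2 + 1)) :
    (if n = 5 then 3 else n - 1) ≤ S := by
  by_cases h5 : n = 5
  · subst h5
    norm_num at hS ⊢
    omega
  rw [if_neg h5]
  rcases Nat.even_or_odd n with ⟨a, ha⟩ | ⟨a, ha⟩
  · have hm : n / 2 = a := by omega
    rw [hm] at hS
    have := arith_sq a (by omega)
    omega
  · have hm : n / 2 = a := by omega
    rw [hm] at hS
    have ha3 : 3 ≤ a := by omega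
    have : a * 4 ≤ a * (a + 1) := Nat.mul_le_mul_left a (by omega)
    omega

lemma masterLB (n : ℕ) (hn : 4 ≤ n) (k : ℕ) (hk1 : 1 ≤ k) (hkn : k ≤ n)
    (l : List ℕ) (hl : ∀ j ∈ l, 1 ≤ j ∧ j ≤ n)
    (hneg : ⟪compD n l (wtD n k), wtD n n⟫ < 0) :
    (if n = 5 then 3 else n - 1) ≤ l.length := by
  rw [compD_transpose n hn l hl] at hneg
  set x := compD n l.reverse (wtD n n) with hxdef
  have hrev : ∀ j ∈ l.reverse, 1 ≤ j ∧ j ≤ n := fun j hj => hl j (List.mem_reverse.mp hj)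
  have hx : PmD n x := PmD_compD n hn l.reverse hrev _ (PmD_wtDn n)
  obtain ⟨m, C, hCm, hfin, hbound⟩ : ∃ m C : ℕ, C + m ≤ n ∧ m ≤ Ncnt n (C + m) x ∧
      (if n = 5 then 3 else n - 1) ≤ PhiD n C m (wtD n n) := by
    by_cases hA : k ≤ n - 2
    · refine ⟨k / 2 + 1, k - (k / 2 + 1), by omega, ?_, ?_⟩
      · rw [show (k - (k / 2 + 1)) + (k / 2 + 1) = k by omega]
        exact finalA n k hn hk1 hA x hx hneg
      · rw [PhiD_init n _ _ (by omega)]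
        set m := k / 2 + 1 with hm
        set C := k - m with hC
        have hR : n - 1 - C = m + (n - 1 - k) := by omega
        rw [hR]
        have h2 := G2 m (n - 1 - k)
        have hm2 : 2 * k ≤ m * (m + 1) := by
          have hk2 := arith_k (k / 2)
          have hma : m = k / 2 + 1 := hm
          have : m * (m + 1) = (k / 2 + 1) * (k / 2 + 2) := by rw [hma]
          omega
        have hd : (n - 1 - k) ≤ m * (n - 1 - k) := Nat.le_mul_of_pos_left _ (by omega)
        have hd2 : 2 * (n - 1 - k) ≤ 2 * m * (n - 1 - k) := by
          rw [mul_assoc]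
          exact Nat.mul_le_mul_left 2 hd
        have hsplit : (if n = 5 then 3 else n - 1) ≤ n - 1 := by split_ifs <;> omega
        omega
    · have hk2 : k = n - 1 ∨ k = n := by omega
      rcases hk2 with hke | hke
      · rw [hke] at hneg
        refine ⟨n / 2, n - 1 - n / 2, by omega, ?_, ?_⟩
        · rw [show (n - 1 - n / 2) + n / 2 = n - 1 by omega]
          exact finalB n hn x hx hneg
        · rw [PhiD_init n _ _ (by omega),
            show n - 1 - (n - 1 - n / 2) = n / 2 by omega]
          have h1 := G1 (n / 2) (n / 2) le_rfl
          exact arithCore n _ hn h1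
      · rw [hke] at hneg
        refine ⟨n / 2 + 1, n - (n / 2 + 1), by omega, ?_, ?_⟩
        · rw [show (n - (n / 2 + 1)) + (n / 2 + 1) = n by omega]
          exact finalC n hn x hx hneg
        · rw [PhiD_init n _ _ (by omega),
            show n - 1 - (n - (n / 2 + 1)) = n / 2 by omega]
          have h1 := G1 (n / 2 + 1) (n / 2) (by omega)
          exact arithCore n _ hn h1
  have h1 := PhiD_compD n C m hn l.reverse hrev (wtD n n)
  rw [← hxdef] at h1
  have h0 := PhiD_zero n C m hCm x hfin
  rw [List.length_reverse] at h1
  omega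

noncomputable def eD (n t : ℕ) : EuclideanSpace ℝ (Fin n) :=
  WithLp.toLp 2 fun i => if (i : ℕ) = t then 1 else 0

lemma wtD_one (n : ℕ) (hn : 4 ≤ n) : wtD n 1 = eD n 0 := by
  unfold wtD eD
  rw [if_neg (by omega), if_neg (by omega)]
  congr 1
  funext i
  by_cases h : (i : ℕ) = 0
  · rw [if_pos (by omega), if_pos h]
  · rw [if_neg (by omega), if_neg h]

lemma sD_step_e (n j : ℕ) (hn : 4 ≤ n) (hj : 1 ≤ j) (hjn : j ≤ n - 1) :
    sD n j (eD n (j - 1)) = eD n j := by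
  ext i
  rw [sD_swap_apply n j hj (by omega)]
  unfold eD
  simp only [PiLp.toLp_apply]
  by_cases h1 : (i : ℕ) = j - 1
  · rw [if_pos h1, if_neg (show ¬(((⟨j, by omega⟩ : Fin n) : ℕ) = j - 1) by
      show ¬(j = j - 1); omega), if_neg (show ¬((i : ℕ) = j) by omega)]
  · rw [if_neg h1]
    by_cases h2 : (i : ℕ) = j
    · rw [if_pos h2, if_pos trivial,
        if_pos h2]
    · rw [if_neg h2, if_neg h1, if_neg h2]

lemma chainD (n : ℕ) (hn : 4 ≤ n) : ∀ j, j ≤ n - 2 →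
    compD n ((List.range j).map (fun i => j - i)) (eD n 0) = eD n j := by
  intro j
  induction j with
  | zero => intro _; rfl
  | succ j ih =>
    intro hj
    have hlist : (List.range (j + 1)).map (fun i => j + 1 - i) =
        (j + 1) :: (List.range j).map (fun i => j - i) := by
      rw [List.range_succ_eq_map]
      simp only [List.map_cons, Nat.sub_zero, List.map_map]
      congr 1
      apply List.map_congr_left
      intro i _
      simp only [Function.comp_apply]
      omega
    rw [hlist, compD_cons, ih (by omega)]
    have := sD_step_e n (j + 1) hn (by omega) (by omega)
    rwa [show j + 1 - 1 = j by omega] at this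

lemma sD_n_e (n : ℕ) (hn : 4 ≤ n) : sD n n (eD n (n - 2)) = negEnD n := by
  ext i
  rw [sD_n_apply n (by omega)]
  unfold eD negEnD
  simp only [PiLp.toLp_apply]
  by_cases h1 : (i : ℕ) = n - 2
  · rw [if_pos h1, if_neg (show ¬(((⟨n - 1, by omega⟩ : Fin n) : ℕ) = n - 2) by
      show ¬(n - 1 = n - 2); omega), if_neg (show ¬((i : ℕ) + 1 = n) by omega)]
    norm_num
  · rw [if_neg h1]
    by_cases h2 : (i : ℕ) = n - 1
    · rw [if_pos h2, if_pos trivial,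
        if_pos (show (i : ℕ) + 1 = n by omega)]
    · rw [if_neg h2, if_neg h1, if_neg (show ¬((i : ℕ) + 1 = n) by have := i.isLt; omega)]

lemma compD_word (n : ℕ) (hn : 4 ≤ n) :
    compD n (n :: ((List.range (n - 2)).map (fun i => n - 2 - i))) (wtD n 1) = negEnD n := by
  rw [compD_cons, wtD_one n hn, chainD n hn (n - 2) le_rfl, sD_n_e n hn]

lemma inner_negEnD (n : ℕ) (hn : 4 ≤ n) : ⟪negEnD n, wtD n n⟫ = -(1 / 2 : ℝ) := by
  rw [innerD, wtD_n_eval]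
  have hlast : n - 1 < n := by omega
  have e : ∀ i : Fin n, negEnD n i * (WithLp.toLp 2 (fun _ => (1 / 2 : ℝ))) i =
      if i = (⟨n - 1, hlast⟩ : Fin n) then -(1 / 2 : ℝ) else 0 := by
    intro i
    unfold negEnD
    simp only [PiLp.toLp_apply]
    by_cases h : (i : ℕ) = n - 1
    · rw [if_pos (show (i : ℕ) + 1 = n by omega), if_pos (Fin.ext h)]
      norm_num
    · rw [if_neg (show ¬((i : ℕ) + 1 = n) by have := i.isLt; omega),
        if_neg (fun he => h (congrArg Fin.val he))]
      norm_num
  rw [Finset.sum_congr rfl (fun i _ => e i),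
    Finset.sum_ite_eq' Finset.univ (⟨n - 1, hlast⟩ : Fin n) (fun _ => -(1 / 2 : ℝ)),
    if_pos (Finset.mem_univ _)]

lemma inner534 : ⟪compD 5 [5, 3, 4] (wtD 5 4), wtD 5 5⟫ < 0 := by
  have e : (⟪compD 5 [5, 3, 4] (wtD 5 4), wtD 5 5⟫ : ℝ) =
      ∑ i : Fin 5, compD 5 [5, 3, 4] (wtD 5 4) i * wtD 5 5 i := innerD _ _ _
  rw [e, Fin.sum_univ_five]
  norm_num [compD, sD, wtD, show ((0 : Fin 5) : ℕ) = 0 from rfl,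
    show ((1 : Fin 5) : ℕ) = 1 from rfl, show ((2 : Fin 5) : ℕ) = 2 from rfl,
    show ((3 : Fin 5) : ℕ) = 3 from rfl, show ((4 : Fin 5) : ℕ) = 4 from rfl]

theorem statement16 (n : ℕ) (hn : 4 ≤ n) :
    (n ≠ 5 →
      (∀ k, 1 ≤ k → k ≤ n → ∀ l : List ℕ, (∀ m ∈ l, 1 ≤ m ∧ m ≤ n) →
          ⟪compD n l (wtD n k), wtD n n⟫ < 0 → n - 1 ≤ l.length) ∧
      IsLeast {k : ℕ | ∃ l : List ℕ, (∀ m ∈ l, 1 ≤ m ∧ m ≤ n) ∧ l.length = k ∧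
          ⟪compD n l (wtD n 1), wtD n n⟫ < 0} (n - 1) ∧
      ⟪compD n (n :: ((List.range (n - 2)).map (fun i => n - 2 - i))) (wtD n 1),
        wtD n n⟫ < 0 ∧
      compD n (n :: ((List.range (n - 2)).map (fun i => n - 2 - i))) (wtD n 1) =
        negEnD n) ∧
    (n = 5 →
      (∀ k, 1 ≤ k → k ≤ 5 → ∀ l : List ℕ, (∀ m ∈ l, 1 ≤ m ∧ m ≤ 5) →
          ⟪compD n l (wtD n k), wtD n 5⟫ < 0 → 3 ≤ l.length) ∧
      IsLeast {k : ℕ | ∃ l : List ℕ, (∀ m ∈ l, 1 ≤ m ∧ m ≤ 5) ∧ l.length = k ∧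
          ⟪compD n l (wtD n 4), wtD n 5⟫ < 0} 3 ∧
      ⟪compD n [5, 3, 4] (wtD n 4), wtD n 5⟫ < 0) := by
  have hword := compD_word n hn
  have hinner : ⟪compD n (n :: ((List.range (n - 2)).map (fun i => n - 2 - i))) (wtD n 1),
      wtD n n⟫ < 0 := by
    rw [hword, inner_negEnD n hn]
    norm_num
  constructor
  · intro hn5
    refine ⟨?_, ⟨?_, ?_⟩, hinner, hword⟩
    · intro k hk1 hkn l hl hneg
      have h := masterLB n hn k hk1 hkn l hl hneg
      rwa [if_neg hn5] at h
    · refine ⟨n :: ((List.range (n - 2)).map (fun i => n - 2 - i)), ?_, ?_, hinner⟩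
      · intro m hm
        rcases List.mem_cons.mp hm with rfl | hm2
        · exact ⟨by omega, le_rfl⟩
        · obtain ⟨i, hi, rfl⟩ := List.mem_map.mp hm2
          rw [List.mem_range] at hi
          constructor <;> omega
      · simp only [List.length_cons, List.length_map, List.length_range]
        omega
    · rintro k' ⟨l, hl, hlen, hneg⟩
      have h := masterLB n hn 1 le_rfl (by omega) l hl hneg
      rw [if_neg hn5] at h
      omega
  · intro hn5
    subst hn5
    refine ⟨?_, ⟨?_, ?_⟩, inner534⟩
    · intro k hk1 hk5 l hl hneg
      have h := masterLB 5 (by norm_num) k hk1 hk5 l hl hneg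
      simpa using h
    · refine ⟨[5, 3, 4], ?_, rfl, inner534⟩
      intro m hm
      fin_cases hm <;> omega
    · rintro k' ⟨l, hl, hlen, hneg⟩
      have h := masterLB 5 (by norm_num) 4 (by norm_num) (by norm_num) l hl hneg
      simpa [hlen] using h
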